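/- arXiv:2411.19089 — 2 statements merged into one kernel-verified Lean document; each statement's English description precedes it below -/
import Mathlib

section
/- Let w(x,y) = (a - c·y, b + c·x) be a nonzero rigid motion in ℝ² and let w_⊥(x,y) := (-(b + c·x), a - c·y) be its pointwise 90° rotation. Suppose w does not vanish on the closure of an open bounded set Ω (e.g., if c ≠ 0, the center of rotation lies outside Ω̄). Define ẑ := w_⊥/‖w_⊥‖ on Ω. Then the space of rigid motions v satisfying v · ẑ = 0 on Ω equals span{w}. -/
open MeasureTheory

/-- Let w(x,y) = (a - c·y, b + c·x) be a nonzero rigid motion in ℝ² that does not vanish on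
the closure of the open bounded set Ω, w_⊥ its pointwise 90° rotation and ẑ := w_⊥/‖w_⊥‖.
Then the space of rigid motions v (parametrized by p ∈ ℝ³ via v_p(x) = (p₀ - p₂ y, p₁ + p₂ x))
satisfying v·ẑ = 0 on Ω equals span{w} (i.e. the parameters form span{(a,b,c)}). -/
theorem stmt5 (a b c : ℝ) (habc : ¬(a = 0 ∧ b = 0 ∧ c = 0))
    (Ω : Set (Fin 2 → ℝ)) (hΩ : IsOpen Ω) (hbd : Bornology.IsBounded Ω) (hne : Ω.Nonempty)
    (w : (Fin 2 → ℝ) → Fin 2 → ℝ) (hw : ∀ x, w x = ![a - c * x 1, b + c * x 0])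
    (wperp : (Fin 2 → ℝ) → Fin 2 → ℝ)
    (hwperp : ∀ x, wperp x = ![-(b + c * x 0), a - c * x 1])
    (hnz : ∀ x ∈ closure Ω, w x ≠ 0)
    (zhat : (Fin 2 → ℝ) → Fin 2 → ℝ)
    (hzhat : ∀ x, zhat x =
      fun i => wperp x i / Real.sqrt ((wperp x 0) ^ 2 + (wperp x 1) ^ 2)) :
    {p : Fin 3 → ℝ | ∀ x ∈ Ω,
        (p 0 - p 2 * x 1) * zhat x 0 + (p 1 + p 2 * x 0) * zhat x 1 = 0}
      = {p : Fin 3 → ℝ | ∃ t : ℝ, p = t • ![a, b, c]} := by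
  ext p
  simp only [Set.mem_setOf_eq]
  constructor
  · intro hp
    -- first derive the polynomial relation on Ω
    have key : ∀ x ∈ Ω, (p 1 * a - p 0 * b) + (p 2 * a - p 0 * c) * x 0
        + (p 2 * b - p 1 * c) * x 1 = 0 := by
      intro x hx
      have hs : (0:ℝ) < Real.sqrt ((wperp x 0) ^ 2 + (wperp x 1) ^ 2) := by
        apply Real.sqrt_pos.2
        have hwx : w x ≠ 0 := hnz x (subset_closure hx)
        have h01 : w x 0 ≠ 0 ∨ w x 1 ≠ 0 := by
          by_contra h
          push_neg at h
          apply hwx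
          funext i
          fin_cases i
          · exact h.1
          · exact h.2
        rw [hw] at h01
        rw [hwperp]
        simp only [Matrix.cons_val_zero, Matrix.cons_val_one, Matrix.head_cons] at h01 ⊢
        rcases h01 with h | h
        · nlinarith [sq_nonneg (b + c * x 0), sq_pos_of_ne_zero h]
        · nlinarith [sq_nonneg (b + c * x 0), sq_pos_of_ne_zero h]
      have h := hp x hx
      rw [hzhat, hwperp] at h
      simp only [Matrix.cons_val_zero, Matrix.cons_val_one, Matrix.head_cons] at h
      rw [hwperp] at hs
      simp only [Matrix.cons_val_zero, Matrix.cons_val_one, Matrix.head_cons] at hs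
      have hs' := hs.ne'
      have h3 : ((p 0 - p 2 * x 1) * (-(b + c * x 0)) + (p 1 + p 2 * x 0) * (a - c * x 1))
          / Real.sqrt ((-(b + c * x 0)) ^ 2 + (a - c * x 1) ^ 2) = 0 := by rw [← h]; ring
      rcases div_eq_zero_iff.1 h3 with h | h
      · linear_combination h
      · exfalso
        have hpos := Real.sqrt_pos.1 hs
        nlinarith [hpos, h]
    obtain ⟨x0, hx0⟩ := hne
    obtain ⟨ε, hε, hball⟩ := Metric.isOpen_iff.1 hΩ x0 hx0
    have mem : ∀ i : Fin 2, Function.update x0 i (x0 i + ε / 2) ∈ Ω := by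
      intro i
      apply hball
      rw [Metric.mem_ball, dist_pi_lt_iff hε]
      intro j
      by_cases hj : j = i
      · subst hj
        simp [Real.dist_eq, abs_of_pos, hε, half_lt_self hε]
      · simp [Function.update_of_ne hj, hε]
    have e0 := key x0 hx0
    have e1 := key _ (mem 0)
    have e2 := key _ (mem 1)
    simp only [Function.update_self, Function.update_of_ne (by decide : (1:Fin 2) ≠ 0),
      Function.update_of_ne (by decide : (0:Fin 2) ≠ 1)] at e1 e2
    have hβ : p 2 * a - p 0 * c = 0 := by
      have : (p 2 * a - p 0 * c) * (ε / 2) = 0 := by linarith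
      rcases mul_eq_zero.1 this with h | h
      · exact h
      · linarith
    have hγ : p 2 * b - p 1 * c = 0 := by
      have : (p 2 * b - p 1 * c) * (ε / 2) = 0 := by linarith
      rcases mul_eq_zero.1 this with h | h
      · exact h
      · linarith
    have hα : p 1 * a - p 0 * b = 0 := by
      linear_combination e0 - x0 0 * hβ - x0 1 * hγ
    push_neg at habc
    have hfun : ∀ t : ℝ, p 0 = t * a → p 1 = t * b → p 2 = t * c →
        p = t • ![a, b, c] := by
      intro t h0 h1 h2
      funext i
      fin_cases i <;>
        simp only [Pi.smul_apply, Matrix.cons_val_zero, Matrix.cons_val_one,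
          Matrix.head_cons, Matrix.cons_val_two, Matrix.tail_cons, smul_eq_mul]
      · exact h0
      · exact h1
      · exact h2
    by_cases ha : a = 0
    · by_cases hb : b = 0
      · have hc : c ≠ 0 := habc ha hb
        refine ⟨p 2 / c, hfun _ ?_ ?_ ?_⟩
        · field_simp
          nlinarith [hβ, hγ, hα]
        · field_simp
          nlinarith [hβ, hγ, hα]
        · field_simp
      · refine ⟨p 1 / b, hfun _ ?_ ?_ ?_⟩
        · field_simp
          nlinarith [hβ, hγ, hα]
        · field_simp
        · field_simp
          nlinarith [hβ, hγ, hα]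
    · refine ⟨p 0 / a, hfun _ ?_ ?_ ?_⟩
      · field_simp
      · field_simp
        nlinarith [hβ, hγ, hα]
      · field_simp
        nlinarith [hβ, hγ, hα]
  · rintro ⟨t, rfl⟩ x hx
    rw [hzhat, hwperp]
    simp only [Matrix.smul_cons, smul_eq_mul, Matrix.smul_empty, Matrix.cons_val_zero,
      Matrix.cons_val_one, Matrix.head_cons, Matrix.cons_val_two, Matrix.tail_cons]
    ring
end

section
/- Let p ∈ ℝ³ with ‖p‖ = 1 and let ẑ(x) := p be the constant unit vector field on an open set Ω ⊂ ℝ³ of positive measure. Let K_p denote the 3-dimensional space of rigid motions of the plane p_⊥ := {x : x·p = 0}, extended constantly in the normal direction: wᵉ(x) := w(P_{p_⊥} x), where P_{p_⊥} is the orthogonal projection onto p_⊥. Then every such extended field wᵉ is a rigid motion of ℝ³ satisfying wᵉ · ẑ = 0 on Ω, and the space of rigid motions v of ℝ³ with v · ẑ = 0 a.e. on Ω equals { wᵉ : w ∈ K_p } and has dimension exactly 3. -/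
open MeasureTheory Matrix

noncomputable section

/-- Cross product with `p`. -/
def crossP (p : Fin 3 → ℝ) (x : Fin 3 → ℝ) : Fin 3 → ℝ :=
  ![p 1 * x 2 - p 2 * x 1, p 2 * x 0 - p 0 * x 2, p 0 * x 1 - p 1 * x 0]

/-- The linear map `(b, c) ↦ (x ↦ b + c • (p × x))`. -/
def Lmap (p : Fin 3 → ℝ) : (Fin 3 → ℝ) × ℝ →ₗ[ℝ] ((Fin 3 → ℝ) → Fin 3 → ℝ) where
  toFun bc := fun x => bc.1 + bc.2 • crossP p x
  map_add' a b := by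
    funext x i
    fin_cases i <;> simp [crossP, Matrix.vecHead, Matrix.vecTail] <;> ring
  map_smul' r a := by
    funext x i
    fin_cases i <;> simp [crossP, Matrix.vecHead, Matrix.vecTail] <;> ring

/-- The functional `(b, c) ↦ b · p`. -/
def fP (p : Fin 3 → ℝ) : (Fin 3 → ℝ) × ℝ →ₗ[ℝ] ℝ where
  toFun bc := ∑ i, bc.1 i * p i
  map_add' a b := by simp [add_mul, Finset.sum_add_distrib]
  map_smul' r a := by simp [Finset.mul_sum, mul_assoc]

end

theorem stmt6_aux (p : Fin 3 → ℝ) (hp : (p 0) ^ 2 + (p 1) ^ 2 + (p 2) ^ 2 = 1)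
    (Ω : Set (Fin 3 → ℝ)) (hΩ : IsOpen Ω) (hpos : 0 < volume Ω)
    (v : (Fin 3 → ℝ) → Fin 3 → ℝ) (A : Matrix (Fin 3) (Fin 3) ℝ) (bb : Fin 3 → ℝ)
    (hA : Aᵀ = -A) (hv : ∀ x, v x = A.mulVec x + bb)
    (hae : ∀ᵐ x ∂(volume.restrict Ω), (∑ i, v x i * p i) = 0) :
    ∃ bb' : Fin 3 → ℝ, ∃ c : ℝ, (∑ i, bb' i * p i) = 0 ∧
      ∀ x, v x = bb' + c • ![p 1 * x 2 - p 2 * x 1,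
                            p 2 * x 0 - p 0 * x 2,
                            p 0 * x 1 - p 1 * x 0] := by
  set g : (Fin 3 → ℝ) → ℝ := fun x => ∑ i, ((∑ j, A i j * x j) + bb i) * p i with hg
  have hgv : ∀ x, g x = ∑ i, v x i * p i := by
    intro x
    rw [hg]
    simp [hv x, Matrix.mulVec, dotProduct]
  have hgc : Continuous g := by
    rw [hg]; fun_prop
  have h0 : ∀ x ∈ Ω, g x = 0 := by
    have hae' : ∀ᵐ x ∂volume, x ∈ Ω → g x = 0 := by
      rw [← ae_restrict_iff' hΩ.measurableSet]
      filter_upwards [hae] with x hx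
      rw [hgv x]; exact hx
    by_contra hcon
    push_neg at hcon
    obtain ⟨x1, hx1, hgx1⟩ := hcon
    have hU : IsOpen (Ω ∩ {x | g x ≠ 0}) :=
      hΩ.inter (isOpen_ne_fun hgc continuous_const)
    have hposU : 0 < volume (Ω ∩ {x | g x ≠ 0}) :=
      hU.measure_pos volume ⟨x1, hx1, hgx1⟩
    have hz : volume (Ω ∩ {x | g x ≠ 0}) = 0 := by
      have h := MeasureTheory.ae_iff.mp hae'
      have : {a | ¬(a ∈ Ω → g a = 0)} = Ω ∩ {x | g x ≠ 0} := by
        ext x; simp [Classical.not_imp]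
      rwa [this] at h
    exact absurd hz hposU.ne'
  obtain ⟨x₀, hx₀⟩ : Ω.Nonempty := nonempty_of_measure_ne_zero hpos.ne'
  obtain ⟨ε, hε, hball⟩ := Metric.isOpen_iff.mp hΩ x₀ hx₀
  have key : ∀ y : Fin 3 → ℝ, ∑ i, A.mulVec y i * p i = 0 := by
    intro y
    by_cases hy : y = 0
    · simp [hy]
    have hny : (0:ℝ) < ‖y‖ := norm_pos_iff.mpr hy
    set t : ℝ := ε / (2 * ‖y‖) with ht
    have htpos : 0 < t := by positivity
    have hmem : x₀ + t • y ∈ Ω := by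
      apply hball
      rw [Metric.mem_ball, dist_eq_norm]
      have h1 : x₀ + t • y - x₀ = t • y := by abel
      rw [h1, norm_smul, Real.norm_eq_abs, abs_of_pos htpos, ht]
      have : ε / (2 * ‖y‖) * ‖y‖ = ε / 2 := by field_simp
      rw [this]; linarith
    have h1 := h0 _ hmem
    have h2 := h0 _ hx₀
    rw [hg] at h1 h2
    have hts : t * (∑ i, A.mulVec y i * p i) = 0 := by
      simp only [Matrix.mulVec, dotProduct, Fin.sum_univ_three, Pi.add_apply,
        Pi.smul_apply, smul_eq_mul] at h1 h2 ⊢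
      linear_combination h1 - h2
    exact (mul_eq_zero.mp hts).resolve_left htpos.ne'
  have hs : ∀ i j, A j i = - A i j := by
    intro i j
    have := congrFun (congrFun hA i) j
    simpa [Matrix.transpose_apply] using this
  have e00 : A 0 0 = 0 := by have := hs 0 0; linarith
  have e11 : A 1 1 = 0 := by have := hs 1 1; linarith
  have e22 : A 2 2 = 0 := by have := hs 2 2; linarith
  have e01 : A 0 1 = -A 1 0 := hs 1 0
  have e20 : A 2 0 = -A 0 2 := hs 0 2
  have e12 : A 1 2 = -A 2 1 := hs 2 1
  have hc0 := key ![1,0,0]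
  have hc1 := key ![0,1,0]
  have hc2 := key ![0,0,1]
  simp only [Matrix.mulVec, dotProduct, Fin.sum_univ_three] at hc0 hc1 hc2
  simp [e00, e11, e22, e01, e20, e12] at hc0 hc1 hc2
  have hbp : ∑ i, bb i * p i = 0 := by
    have h2 := h0 x₀ hx₀
    have hk := key x₀
    rw [hg] at h2
    simp only [Matrix.mulVec, dotProduct, Fin.sum_univ_three] at h2 hk ⊢
    linear_combination h2 - hk
  have hw0 : A 2 1 = (A 2 1 * p 0 + A 0 2 * p 1 + A 1 0 * p 2) * p 0 := by
    linear_combination -A 2 1 * hp - p 1 * hc2 + p 2 * hc1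
  have hw1 : A 0 2 = (A 2 1 * p 0 + A 0 2 * p 1 + A 1 0 * p 2) * p 1 := by
    linear_combination -A 0 2 * hp + p 0 * hc2 - p 2 * hc0
  have hw2 : A 1 0 = (A 2 1 * p 0 + A 0 2 * p 1 + A 1 0 * p 2) * p 2 := by
    linear_combination -A 1 0 * hp - p 0 * hc1 + p 1 * hc0
  refine ⟨bb, A 2 1 * p 0 + A 0 2 * p 1 + A 1 0 * p 2, hbp, ?_⟩
  intro x
  rw [hv x]
  funext i
  fin_cases i <;>
    simp [Matrix.mulVec, dotProduct, Fin.sum_univ_three,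
      Matrix.vecHead, Matrix.vecTail]
  · linear_combination x 0 * e00 + x 1 * e01 - x 1 * hw2 + x 2 * hw1
  · linear_combination x 0 * hw2 + x 1 * e11 + x 2 * e12 - x 2 * hw0
  · linear_combination x 0 * e20 - x 0 * hw1 + x 1 * hw0 + x 2 * e22

theorem stmt6_inj (p : Fin 3 → ℝ) (hp : (p 0) ^ 2 + (p 1) ^ 2 + (p 2) ^ 2 = 1) :
    Function.Injective (Lmap p) := by
  rw [← LinearMap.ker_eq_bot, LinearMap.ker_eq_bot']
  rintro ⟨bb, c⟩ h
  have hbb : bb = 0 := by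
    funext i
    have hi := congrFun (congrFun h 0) i
    fin_cases i <;> simpa [Lmap, crossP, Matrix.vecHead, Matrix.vecTail] using hi
  subst hbb
  have h1 := congrFun (congrFun h ![1,0,0]) 1
  have h2 := congrFun (congrFun h ![1,0,0]) 2
  have h3 := congrFun (congrFun h ![0,1,0]) 2
  simp [Lmap, crossP] at h1 h2 h3
  rcases h1 with hc | hp2; · simp [hc]
  rcases h2 with hc | hp1; · simp [hc]
  rcases h3 with hc | hp0; · simp [hc]
  exfalso; rw [hp0, hp1, hp2] at hp; norm_num at hp

theorem stmt6_ker (p : Fin 3 → ℝ) (hp : (p 0) ^ 2 + (p 1) ^ 2 + (p 2) ^ 2 = 1) :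
    Module.finrank ℝ (LinearMap.ker (fP p)) = 3 := by
  have hsurj : Function.Surjective (fP p) := by
    intro r
    refine ⟨(r • p, 0), ?_⟩
    simp [fP, Fin.sum_univ_three]
    linear_combination r * hp
  have h := LinearMap.finrank_range_add_finrank_ker (fP p)
  rw [LinearMap.range_eq_top.mpr hsurj] at h
  simp [Module.finrank_prod] at h
  omega

/-- For the constant unit vector field ẑ = p on an open Ω ⊂ ℝ³ of positive measure, the
space of rigid motions v of ℝ³ with v·p = 0 a.e. on Ω equals the space of rigid motions of
the plane p_⊥ extended constantly in direction p (concretely the fields x ↦ b + c·(p × x)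
with b·p = 0), and this space is 3-dimensional. -/
theorem stmt6 (p : Fin 3 → ℝ) (hp : (p 0) ^ 2 + (p 1) ^ 2 + (p 2) ^ 2 = 1)
    (Ω : Set (Fin 3 → ℝ)) (hΩ : IsOpen Ω) (hpos : 0 < volume Ω) :
    ({v : (Fin 3 → ℝ) → Fin 3 → ℝ |
        ∃ A : Matrix (Fin 3) (Fin 3) ℝ, ∃ bb : Fin 3 → ℝ, Aᵀ = -A ∧
          (∀ x, v x = A.mulVec x + bb) ∧
          (∀ᵐ x ∂(volume.restrict Ω), (∑ i, v x i * p i) = 0)}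
      = {v : (Fin 3 → ℝ) → Fin 3 → ℝ |
          ∃ bb : Fin 3 → ℝ, ∃ c : ℝ, (∑ i, bb i * p i) = 0 ∧
            ∀ x, v x = bb + c • ![p 1 * x 2 - p 2 * x 1,
                                  p 2 * x 0 - p 0 * x 2,
                                  p 0 * x 1 - p 1 * x 0]}) ∧
    ∃ K : Submodule ℝ ((Fin 3 → ℝ) → Fin 3 → ℝ),
      (↑K : Set ((Fin 3 → ℝ) → Fin 3 → ℝ)) =
        {v | ∃ bb : Fin 3 → ℝ, ∃ c : ℝ, (∑ i, bb i * p i) = 0 ∧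
          ∀ x, v x = bb + c • ![p 1 * x 2 - p 2 * x 1,
                                p 2 * x 0 - p 0 * x 2,
                                p 0 * x 1 - p 1 * x 0]} ∧
      Module.finrank ℝ K = 3 := by
  constructor
  · ext v
    simp only [Set.mem_setOf_eq]
    constructor
    · rintro ⟨A, bb, hA, hv, hae⟩
      exact stmt6_aux p hp Ω hΩ hpos v A bb hA hv hae
    · rintro ⟨bb, c, hbp, hvx⟩
      refine ⟨![![0, -(c * p 2), c * p 1], ![c * p 2, 0, -(c * p 0)],
               ![-(c * p 1), c * p 0, 0]], bb, ?_, ?_, ?_⟩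
      · ext i j
        erw [Matrix.neg_apply]
        fin_cases i <;> fin_cases j <;>
          simp [Matrix.transpose_apply, Matrix.transpose, Matrix.of_apply, Matrix.neg_apply, Matrix.vecHead, Matrix.vecTail]
      · intro x
        rw [hvx x]
        funext i
        fin_cases i <;>
          simp [Matrix.mulVec, dotProduct, Fin.sum_univ_three,
            Matrix.vecHead, Matrix.vecTail] <;> ring
      · apply MeasureTheory.ae_of_all
        intro x
        rw [hvx x]
        simp only [Fin.sum_univ_three] at hbp ⊢
        simp [Matrix.vecHead, Matrix.vecTail]
        linear_combination hbp
  · refine ⟨(LinearMap.ker (fP p)).map (Lmap p), ?_, ?_⟩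
    · ext v
      simp only [Submodule.map_coe, Set.mem_image, SetLike.mem_coe,
        LinearMap.mem_ker, Set.mem_setOf_eq]
      constructor
      · rintro ⟨⟨bb, c⟩, hker, rfl⟩
        refine ⟨bb, c, by simpa [fP] using hker, fun x => ?_⟩
        simp [Lmap, crossP]
      · rintro ⟨bb, c, hbp, hvx⟩
        refine ⟨(bb, c), by simpa [fP] using hbp, ?_⟩
        funext x
        rw [hvx x]
        simp [Lmap, crossP]
    · rw [← (Submodule.equivMapOfInjective (Lmap p) (stmt6_inj p hp)
        (LinearMap.ker (fP p))).finrank_eq]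
      exact stmt6_ker p hp
end
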